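/- For every integer d ≥ 1 there exists K_0 such that the following holds for all K ≥ K_0 and all sufficiently large n (depending on K and d). Let s > 0 with 1/s a positive integer và K = s^d·n, tessellate [0,1]^d into the s^{−d} cells of side s, and let P be a set of n points of [0,1]^d none lying on a cell boundary. Let Γ be the graph whose vertices are the cells that are dense with respect to P, with two cells adjacent whenever they are friends. If the number of cells sparse with respect to P is at most e^{−K/2}·n, then the number of connected components of Γ is at most e^{−K/3}·n. -/

import Mathlib

/-- The half-open cell of the side-`1/m` tessellation of `[0,1]^d` indexed by `v`. -/
def cell (d m : ℕ) (v : Fin d → Fin m) : Set (EuclideanSpace ℝ (Fin d)) :=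
  {x | ∀ k : Fin d, (v k : ℝ) / m ≤ x k ∧ x k < ((v k : ℝ) + 1) / m}

/-- Two cells are friends if their closures intersect. -/
def IsFriend (d m : ℕ) (v w : Fin d → Fin m) : Prop :=
  (closure (cell d m v) ∩ closure (cell d m w)).Nonempty

/-- A cell is sparse with respect to the points `x` if it contains at most `R = 2·3^d`
of them. -/
def IsSparse (d m n : ℕ) (x : Fin n → EuclideanSpace ℝ (Fin d))
    (v : Fin d → Fin m) : Prop :=
  {i : Fin n | x i ∈ cell d m v}.ncard ≤ 2 * 3 ^ d

/-- The number of sparse cells with respect to the points `x`. -/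
noncomputable def sparseCount (d m n : ℕ)
    (x : Fin n → EuclideanSpace ℝ (Fin d)) : ℕ :=
  {v : Fin d → Fin m | IsSparse d m n x v}.ncard

/-- The graph `Γ` whose vertices are the dense cells, two of them adjacent whenever they
are friends. -/
def denseGraph (d m n : ℕ) (x : Fin n → EuclideanSpace ℝ (Fin d)) :
    SimpleGraph {v : Fin d → Fin m // ¬ IsSparse d m n x v} :=
  SimpleGraph.fromRel fun v w => IsFriend d m v.1 w.1

/-- For every `d ≥ 1` there is `K₀` such that for all `K ≥ K₀` and all sufficiently large
`n`: if `1/s = m ∈ ℕ`, `K = s^d·n`, and `P` is a set of `n` points of `[0,1]^d` none on a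
cell boundary with at most `e^{-K/2}·n` sparse cells, then the graph `Γ` on dense cells
has at most `e^{-K/3}·n` connected components. -/
lemma closure_cell (d m : ℕ) (hm : 0 < m) (v : Fin d → Fin m) :
    closure (cell d m v)
      = {x : EuclideanSpace ℝ (Fin d) |
          ∀ k, (v k : ℝ) / m ≤ x k ∧ x k ≤ ((v k : ℝ) + 1) / m} := by
  have h1 : cell d m v
      = (PiLp.homeomorph 2 (fun _ : Fin d => ℝ)) ⁻¹' Set.univ.pi (fun k : Fin d => Set.Ico ((v k : ℝ) / m) (((v k : ℝ) + 1) / m)) := by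
    ext y
    constructor
    · intro h i _; exact ⟨(h i).1, (h i).2⟩
    · intro h i; exact h i (Set.mem_univ i)
  have hm' : (0:ℝ) < m := by exact_mod_cast hm
  rw [h1, ← Homeomorph.preimage_closure, closure_pi_set]
  ext y
  constructor
  · intro h k
    have := h k (Set.mem_univ k)
    simp only [closure_Ico (ne_of_lt ((div_lt_div_iff_of_pos_right hm').mpr
      (show (v k : ℝ) < (v k : ℝ) + 1 by linarith))), Set.mem_Icc] at this
    exact this
  · intro h k _
    simp only [closure_Ico (ne_of_lt ((div_lt_div_iff_of_pos_right hm').mpr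
      (show (v k : ℝ) < (v k : ℝ) + 1 by linarith))), Set.mem_Icc]
    exact h k

lemma friend_succ (d m : ℕ) (v : Fin d → Fin m) (k : Fin d) (h : (v k : ℕ) + 1 < m) :
    IsFriend d m v (Function.update v k ⟨(v k : ℕ) + 1, h⟩) := by
  have hm : 0 < m := lt_of_le_of_lt (Nat.zero_le _) h
  have hm' : (0:ℝ) < m := by exact_mod_cast hm
  have hdiv : ∀ a b : ℝ, a ≤ b → a / m ≤ b / m := fun a b hab => by gcongr
  refine ⟨WithLp.toLp 2 (fun j => ((v j : ℝ) + 1) / m : Fin d → ℝ), ?_, ?_⟩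
  · rw [closure_cell d m hm]
    intro j
    simp only [WithLp.ofLp_toLp]
    exact ⟨hdiv _ _ (by linarith), le_refl _⟩
  · rw [closure_cell d m hm]
    intro j
    simp only [WithLp.ofLp_toLp]
    by_cases hj : j = k
    · subst hj
      simp only [Function.update_self]
      exact ⟨hdiv _ _ (by push_cast; linarith), hdiv _ _ (by push_cast; linarith)⟩
    · simp only [Function.update_of_ne hj]
      exact ⟨hdiv _ _ (by linarith), le_refl _⟩

lemma card_components_le (d m n : ℕ) (x : Fin n → EuclideanSpace ℝ (Fin d)) :
    Nat.card (denseGraph d m n x).ConnectedComponent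
      ≤ 1 + d * sparseCount d m n x := by
  classical
  set G := denseGraph d m n x with hG
  by_cases hV : Nonempty {v : Fin d → Fin m // ¬ IsSparse d m n x v}
  swap
  · haveI : IsEmpty {v : Fin d → Fin m // ¬ IsSparse d m n x v} := not_nonempty_iff.mp hV
    haveI : IsEmpty G.ConnectedComponent :=
      ⟨fun C => C.exists_rep.elim fun v _ => isEmptyElim v⟩
    simp [Nat.card_of_isEmpty]
  haveI : Fintype {v : Fin d → Fin m // ¬ IsSparse d m n x v} := Fintype.ofFinite _
  -- the "height" of a cell
  set E : (Fin d → Fin m) → ℕ := fun v => ∑ k, (v k : ℕ) with hE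
  -- choose a maximal-height representative in each component
  have htop : ∀ C : G.ConnectedComponent,
      ∃ u : {v : Fin d → Fin m // ¬ IsSparse d m n x v},
        G.connectedComponentMk u = C ∧
        ∀ u', G.connectedComponentMk u' = C → E u'.1 ≤ E u.1 := by
    intro C
    obtain ⟨v, hv⟩ := C.exists_rep
    obtain ⟨b, hb, hmax⟩ := Finset.exists_max_image
      (Finset.univ.filter fun u : {v : Fin d → Fin m // ¬ IsSparse d m n x v} =>
        G.connectedComponentMk u = C) (fun u => E u.1)
      ⟨v, by simp only [Finset.mem_filter, Finset.mem_univ, true_and]; exact hv⟩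
    simp only [Finset.mem_filter, Finset.mem_univ, true_and] at hb
    refine ⟨b, hb, fun u' hu' => hmax u'
      (by simp only [Finset.mem_filter, Finset.mem_univ, true_and]; exact hu')⟩
  choose top htop1 htop2 using htop
  -- for every component, the top cell is either the all-max cell, or it has a
  -- sparse upper friend
  have key : ∀ C : G.ConnectedComponent,
      (∀ k, (((top C).1 k : ℕ) + 1 = m)) ∨
      ∃ p : {w : Fin d → Fin m // IsSparse d m n x w} × Fin d,
        (∀ j, j ≠ p.2 → (top C).1 j = p.1.1 j) ∧
        (((top C).1 p.2 : ℕ) + 1 = (p.1.1 p.2 : ℕ)) := by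
    intro C
    by_contra hcon
    push_neg at hcon
    obtain ⟨⟨k, hk⟩, h2⟩ := hcon
    set v := (top C).1 with hv
    have hklt : (v k : ℕ) + 1 < m := lt_of_le_of_ne (v k).2 hk
    set w : Fin d → Fin m := Function.update v k ⟨(v k : ℕ) + 1, hklt⟩ with hw
    have hwk : (w k : ℕ) = (v k : ℕ) + 1 := by simp [hw]
    by_cases hws : IsSparse d m n x w
    · exact h2 (⟨w, hws⟩, k)
        (fun j hj => by simp [hw, Function.update_of_ne hj]) hwk.symm
    · -- w is dense, adjacent to v, so in the same component, contradicting maximality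
      have hne : (top C) ≠ ⟨w, hws⟩ := by
        intro hEq
        have : v k = w k := by rw [hv, hEq]
        rw [Fin.ext_iff, hwk] at this
        omega
      have hadj : G.Adj (top C) ⟨w, hws⟩ := by
        rw [hG, denseGraph]
        exact ⟨hne, Or.inl (friend_succ d m v k hklt)⟩
      have hcomp : G.connectedComponentMk ⟨w, hws⟩ = C := by
        rw [← htop1 C]
        exact (SimpleGraph.ConnectedComponent.sound hadj.reachable).symm
      have hle := htop2 C ⟨w, hws⟩ hcomp
      -- but E w = E v + 1
      have hEw : E w = E v + 1 := by
        rw [hE]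
        simp only
        have : ∀ j, ((w j : ℕ)) = Function.update (fun j => (v j : ℕ)) k ((v k : ℕ) + 1) j := by
          intro j
          by_cases hj : j = k
          · subst hj; simp [hw]
          · simp [hw, Function.update_of_ne hj]
        rw [Finset.sum_congr rfl (fun j _ => this j),
          Finset.sum_update_of_mem (Finset.mem_univ k)]
        rw [← Finset.add_sum_erase Finset.univ (fun j => (v j : ℕ)) (Finset.mem_univ k),
          Finset.erase_eq]
        ring
      have hle' : E w ≤ E v := hle
      omega
  -- build an injection into `Option (sparse cells × Fin d)`
  set g : G.ConnectedComponent →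
      Option ({w : Fin d → Fin m // IsSparse d m n x w} × Fin d) := fun C =>
    if h : ∀ k, (((top C).1 k : ℕ) + 1 = m) then none
    else some ((key C).resolve_left h).choose with hg
  have hginj : Function.Injective g := by
    intro C₁ C₂ hEq
    rw [hg] at hEq
    simp only at hEq
    by_cases h1 : ∀ k, (((top C₁).1 k : ℕ) + 1 = m)
    · by_cases h2 : ∀ k, (((top C₂).1 k : ℕ) + 1 = m)
      · have : top C₁ = top C₂ := by
          ext j
          · have := h1 j; have := h2 j; omega
        rw [← htop1 C₁, ← htop1 C₂, this]
      · rw [dif_pos h1, dif_neg h2] at hEq; exact absurd hEq (by simp)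
    · by_cases h2 : ∀ k, (((top C₂).1 k : ℕ) + 1 = m)
      · rw [dif_neg h1, dif_pos h2] at hEq; exact absurd hEq (by simp)
      · rw [dif_neg h1, dif_neg h2, Option.some_inj] at hEq
        obtain ⟨ha1, hb1⟩ := ((key C₁).resolve_left h1).choose_spec
        obtain ⟨ha2, hb2⟩ := ((key C₂).resolve_left h2).choose_spec
        rw [hEq] at ha1 hb1
        have : top C₁ = top C₂ := by
          ext j
          by_cases hj : j = ((key C₂).resolve_left h2).choose.2
          · subst hj
            have := hb1; have := hb2; omega
          · rw [ha1 j hj, ha2 j hj]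
        rw [← htop1 C₁, ← htop1 C₂, this]
  haveI : Fintype {w : Fin d → Fin m // IsSparse d m n x w} := Fintype.ofFinite _
  have hcard := Nat.card_le_card_of_injective g hginj
  have hval : Nat.card (Option ({w : Fin d → Fin m // IsSparse d m n x w} × Fin d))
      = Fintype.card {w : Fin d → Fin m // IsSparse d m n x w} * d + 1 := by
    rw [Nat.card_eq_fintype_card, Fintype.card_option, Fintype.card_prod, Fintype.card_fin]
  rw [hval] at hcard
  have hsp : sparseCount d m n x = Fintype.card {w : Fin d → Fin m // IsSparse d m n x w} := by
    rw [sparseCount, ← Nat.card_coe_set_eq, Nat.card_eq_fintype_card]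
    exact Fintype.card_congr' rfl
  rw [← hsp, Nat.mul_comm] at hcard
  omega

theorem few_components_of_dense_graph (d : ℕ) (hd : 1 ≤ d) :
    ∃ K₀ : ℝ, ∀ K : ℝ, K₀ ≤ K → ∃ N : ℕ, ∀ n : ℕ, N ≤ n →
      ∀ m : ℕ, 0 < m → K = (n : ℝ) / (m : ℝ) ^ d →
      ∀ x : Fin n → EuclideanSpace ℝ (Fin d),
        Function.Injective x →
        (∀ i : Fin n, ∀ k : Fin d, x i k ∈ Set.Icc (0 : ℝ) 1) →
        (∀ i : Fin n, ∀ k : Fin d, ∀ j : ℕ, x i k * m ≠ j) →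
        ((sparseCount d m n x : ℝ) ≤ Real.exp (-K / 2) * n) →
        (Nat.card (denseGraph d m n x).ConnectedComponent : ℝ)
          ≤ Real.exp (-K / 3) * n := by
  refine ⟨max 1 (6 * Real.log (2 * d)), fun K hK =>
    ⟨⌈(2:ℝ) * Real.exp (K / 3)⌉₊, fun n hn m hm _ x _ _ _ hsp => ?_⟩⟩
  have hd1 : (1:ℝ) ≤ d := by exact_mod_cast hd
  have hlog : 6 * Real.log (2 * d) ≤ K := le_trans (le_max_right _ _) hK
  have h2d : (0:ℝ) < 2 * d := by linarith
  have hexp6 : 2 * (d:ℝ) ≤ Real.exp (K / 6) := by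
    rw [← Real.exp_log h2d]
    exact Real.exp_le_exp.mpr (by linarith)
  have he : Real.exp (K / 6) * Real.exp (-K / 2) = Real.exp (-K / 3) := by
    rw [← Real.exp_add]; congr 1; ring
  have hkey : (d:ℝ) * Real.exp (-K / 2) * 2 ≤ Real.exp (-K / 3) := by
    have := mul_le_mul_of_nonneg_right hexp6 (Real.exp_pos (-K / 2)).le
    rw [he] at this
    linarith
  have hnR : (2:ℝ) * Real.exp (K / 3) ≤ n := by
    refine le_trans (Nat.le_ceil _) ?_
    exact_mod_cast hn
  have h2 : (2:ℝ) ≤ Real.exp (-K / 3) * n := by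
    have := mul_le_mul_of_nonneg_left hnR (Real.exp_pos (-K / 3)).le
    have he0 : Real.exp (-K / 3) * (2 * Real.exp (K / 3)) = 2 := by
      rw [show Real.exp (-K / 3) * (2 * Real.exp (K / 3))
          = 2 * (Real.exp (-K / 3 + K / 3)) by rw [Real.exp_add]; ring]
      rw [show -K / 3 + K / 3 = 0 by ring, Real.exp_zero]; ring
    linarith [he0 ▸ this]
  have h1 : (Nat.card (denseGraph d m n x).ConnectedComponent : ℝ)
      ≤ 1 + d * sparseCount d m n x := by exact_mod_cast card_components_le d m n x
  have h3 : (d:ℝ) * sparseCount d m n x ≤ d * (Real.exp (-K / 2) * n) :=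
    mul_le_mul_of_nonneg_left hsp (by linarith)
  have h4 : (d:ℝ) * Real.exp (-K / 2) * 2 * n ≤ Real.exp (-K / 3) * n :=
    mul_le_mul_of_nonneg_right hkey (Nat.cast_nonneg n)
  nlinarith [h1, h3, h4, h2]
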